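/- arXiv:2411.12551 — 2 statements merged into one kernel-verified Lean document; each statement's English description precedes it below -/
import Mathlib

section
/- (Darboux basis theorem) Let V be a 2n-dimensional real vector space with a nondegenerate alternating bilinear form ω. Then there exists a basis e₁, …, eₙ, f₁, …, fₙ of V such that ω(eᵢ,eⱼ) = 0, ω(fᵢ,fⱼ) = 0, and ω(eᵢ,fⱼ) = δᵢⱼ for all 1 ≤ i,j ≤ n; equivalently, (V,ω) is linearly symplectomorphic to ℝ²ⁿ with the standard symplectic form ω₀((q,p),(q',p')) = Σᵢ (qᵢ p'ᵢ − pᵢ q'ᵢ). -/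
lemma darboux_skew {V : Type*} [AddCommGroup V] [Module ℝ V]
    (ω : V →ₗ[ℝ] V →ₗ[ℝ] ℝ) (halt : ∀ v : V, ω v v = 0) (v w : V) :
    ω w v = -ω v w := by
  have h := halt (v + w)
  simp [map_add, LinearMap.add_apply, halt] at h
  linarith

lemma darboux_fam : ∀ (n : ℕ) (V : Type*) [AddCommGroup V] [Module ℝ V]
    [FiniteDimensional ℝ V]
    (ω : V →ₗ[ℝ] V →ₗ[ℝ] ℝ), (∀ v : V, ω v v = 0) →
    (∀ v : V, (∀ w : V, ω v w = 0) → v = 0) →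
    Module.finrank ℝ V = 2 * n →
    ∃ e f : Fin n → V,
      (∀ i j, ω (e i) (e j) = 0) ∧ (∀ i j, ω (f i) (f j) = 0) ∧
      (∀ i j, ω (e i) (f j) = if i = j then 1 else 0) := by
  intro n
  induction n with
  | zero =>
    intro V _ _ _ ω halt hnd hdim
    exact ⟨Fin.elim0, Fin.elim0, fun i => i.elim0, fun i => i.elim0, fun i => i.elim0⟩
  | succ n ih =>
    intro V _ _ _ ω halt hnd hdim
    have skew := darboux_skew ω halt
    -- find e0 with e0 ≠ 0
    have hpos : 0 < Module.finrank ℝ V := by omega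
    have : Nontrivial V := Module.nontrivial_of_finrank_pos hpos
    obtain ⟨e0, he0⟩ := exists_ne (0 : V)
    -- find w with ω e0 w ≠ 0
    have hw : ∃ w, ω e0 w ≠ 0 := by
      by_contra hc
      push_neg at hc
      exact he0 (hnd e0 hc)
    obtain ⟨w, hw⟩ := hw
    set f0 : V := (ω e0 w)⁻¹ • w with hf0
    have hef : ω e0 f0 = 1 := by
      simp [hf0, map_smul, smul_eq_mul]
      field_simp
    -- the symplectic complement of span {e0, f0}
    set φ : V →ₗ[ℝ] ℝ × ℝ := (ω e0).prod (ω f0) with hφ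
    have hφe : φ e0 = (0, -1) := by
      simp [hφ, LinearMap.prod_apply, halt, skew e0 f0, hef]
    have hφf : φ f0 = (1, 0) := by
      simp [hφ, LinearMap.prod_apply, halt, hef]
    have hsurj : Function.Surjective φ := by
      intro ⟨a, b⟩
      refine ⟨a • f0 - b • e0, ?_⟩
      simp [map_sub, map_smul, hφe, hφf, Prod.ext_iff, Prod.smul_mk]
    set W := LinearMap.ker φ with hW
    have hWdim : Module.finrank ℝ W = 2 * n := by
      have h1 := LinearMap.finrank_range_add_finrank_ker φ
      rw [LinearMap.range_eq_top.mpr hsurj, finrank_top] at h1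
      rw [hdim] at h1
      have h2 : Module.finrank ℝ (ℝ × ℝ) = 2 := by
        simp [Module.finrank_prod]
      rw [h2] at h1
      rw [← hW] at h1
      omega
    -- membership in W
    have hWmem : ∀ v : V, v ∈ W ↔ ω e0 v = 0 ∧ ω f0 v = 0 := by
      intro v
      simp [hW, hφ, LinearMap.mem_ker, LinearMap.prod_apply, Prod.ext_iff]
    -- restricted form
    set ω' : W →ₗ[ℝ] W →ₗ[ℝ] ℝ := ω.compl₁₂ W.subtype W.subtype with hω'
    have hω'app : ∀ v w : W, ω' v w = ω (v : V) (w : V) := fun _ _ => rfl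
    have halt' : ∀ v : W, ω' v v = 0 := fun v => halt v
    have hnd' : ∀ v : W, (∀ w : W, ω' v w = 0) → v = 0 := by
      intro v hv
      have hv1 : ω e0 (v : V) = 0 := ((hWmem v).1 v.2).1
      have hv2 : ω f0 (v : V) = 0 := ((hWmem v).1 v.2).2
      have : (v : V) = 0 := by
        apply hnd
        intro u
        set u' : V := u - ω e0 u • f0 + ω f0 u • e0 with hu'
        have hu'mem : u' ∈ W := by
          rw [hWmem]
          constructor
          · simp [hu', map_sub, map_add, map_smul, smul_eq_mul, hef, halt]
          · simp [hu', map_sub, map_add, map_smul, smul_eq_mul, halt, skew e0 f0, hef]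
        have h0 : ω (v : V) u' = 0 := hv ⟨u', hu'mem⟩
        have hvf : ω (v : V) f0 = 0 := by rw [skew f0 v, hv2]; ring
        have hve : ω (v : V) e0 = 0 := by rw [skew e0 v, hv1]; ring
        have : ω (v:V) u = ω (v:V) u' + ω e0 u * ω (v:V) f0 - ω f0 u * ω (v:V) e0 := by
          simp [hu', map_sub, map_add, map_smul, smul_eq_mul]
          ring
        rw [this, h0, hvf, hve]; ring
      exact Subtype.ext this
    obtain ⟨e', f', h1', h2', h3'⟩ := ih W ω' halt' hnd' hWdim
    -- memberships of e' f'
    have he'1 : ∀ i, ω e0 ((e' i : V)) = 0 := fun i => ((hWmem _).1 (e' i).2).1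
    have he'2 : ∀ i, ω f0 ((e' i : V)) = 0 := fun i => ((hWmem _).1 (e' i).2).2
    have hf'1 : ∀ i, ω e0 ((f' i : V)) = 0 := fun i => ((hWmem _).1 (f' i).2).1
    have hf'2 : ∀ i, ω f0 ((f' i : V)) = 0 := fun i => ((hWmem _).1 (f' i).2).2
    refine ⟨Fin.cons e0 (fun i => (e' i : V)), Fin.cons f0 (fun i => (f' i : V)), ?_, ?_, ?_⟩
    · intro i j
      refine Fin.cases ?_ (fun i => ?_) i <;> refine Fin.cases ?_ (fun j => ?_) j
      · simp only [Fin.cons_zero]; exact halt e0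
      · simp only [Fin.cons_zero, Fin.cons_succ]; exact he'1 j
      · simp only [Fin.cons_zero, Fin.cons_succ]
        rw [skew e0 _, he'1 i]; ring
      · simp only [Fin.cons_succ]
        have := h1' i j; rw [hω'app] at this; exact this
    · intro i j
      refine Fin.cases ?_ (fun i => ?_) i <;> refine Fin.cases ?_ (fun j => ?_) j
      · simp only [Fin.cons_zero]; exact halt f0
      · simp only [Fin.cons_zero, Fin.cons_succ]; exact hf'2 j
      · simp only [Fin.cons_zero, Fin.cons_succ]
        rw [skew f0 _, hf'2 i]; ring
      · simp only [Fin.cons_succ]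
        have := h2' i j; rw [hω'app] at this; exact this
    · intro i j
      refine Fin.cases ?_ (fun i => ?_) i <;> refine Fin.cases ?_ (fun j => ?_) j
      · simp only [Fin.cons_zero, if_pos rfl]; exact hef
      · simp only [Fin.cons_zero, Fin.cons_succ]
        rw [if_neg (Fin.succ_ne_zero j).symm]
        exact hf'1 j
      · simp only [Fin.cons_zero, Fin.cons_succ]
        rw [if_neg (Fin.succ_ne_zero i), skew f0 _, he'2 i]; ring
      · simp only [Fin.cons_succ]
        have := h3' i j; rw [hω'app] at this
        rw [this]
        simp [Fin.succ_inj]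

/-- Darboux basis theorem: a `2n`-dimensional symplectic vector space has a basis
`e₁,…,eₙ,f₁,…,fₙ` with `ω(eᵢ,eⱼ) = 0`, `ω(fᵢ,fⱼ) = 0`, `ω(eᵢ,fⱼ) = δᵢⱼ`; equivalently,
`(V,ω)` is linearly symplectomorphic to `ℝ²ⁿ` with the standard symplectic form. -/
theorem darboux_basis
    (n : ℕ) (V : Type*) [AddCommGroup V] [Module ℝ V] [FiniteDimensional ℝ V]
    (hdim : Module.finrank ℝ V = 2 * n)
    (ω : V →ₗ[ℝ] V →ₗ[ℝ] ℝ)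
    (halt : ∀ v : V, ω v v = 0)
    (hnd : ∀ v : V, (∀ w : V, ω v w = 0) → v = 0) :
    (∃ b : Module.Basis (Fin n ⊕ Fin n) ℝ V,
      (∀ i j : Fin n, ω (b (Sum.inl i)) (b (Sum.inl j)) = 0) ∧
      (∀ i j : Fin n, ω (b (Sum.inr i)) (b (Sum.inr j)) = 0) ∧
      (∀ i j : Fin n, ω (b (Sum.inl i)) (b (Sum.inr j)) = if i = j then 1 else 0)) ∧
    (∃ f : ((Fin n → ℝ) × (Fin n → ℝ)) ≃ₗ[ℝ] V,
      ∀ x y : (Fin n → ℝ) × (Fin n → ℝ),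
        ω (f x) (f y) = ∑ i : Fin n, (x.1 i * y.2 i - x.2 i * y.1 i)) := by
  have skew := darboux_skew ω halt
  obtain ⟨e, f, h1, h2, h3⟩ := darboux_fam n V ω halt hnd hdim
  set g : Fin n ⊕ Fin n → V := Sum.elim e f with hg
  -- pairing values
  have hgval : ∀ k l, ω (g k) (g l) =
      (match k, l with
        | Sum.inl i, Sum.inl j => 0
        | Sum.inr i, Sum.inr j => 0
        | Sum.inl i, Sum.inr j => if i = j then (1:ℝ) else 0
        | Sum.inr i, Sum.inl j => if j = i then (-1:ℝ) else 0) := by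
    rintro (i|i) (j|j)
    · exact h1 i j
    · exact h3 i j
    · rw [hg]; simp only [Sum.elim_inl, Sum.elim_inr]
      rw [skew (e j) (f i), h3 j i]
      split <;> norm_num
    · exact h2 i j
  have li : LinearIndependent ℝ g := by
    rw [Fintype.linearIndependent_iff]
    intro c hc
    have key : ∀ l, ∑ k, c k * ω (g k) (g l) = 0 := by
      intro l
      have := congrArg (fun x => ω x (g l)) hc
      simpa [map_sum, map_smul, LinearMap.sum_apply, LinearMap.smul_apply,
        smul_eq_mul] using this
    rintro (j|j)
    · have := key (Sum.inr j)
      simpa [Fintype.sum_sum_type, hgval, mul_ite, Finset.sum_ite_eq'] using this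
    · have := key (Sum.inl j)
      simpa [Fintype.sum_sum_type, hgval, mul_ite, Finset.sum_ite_eq,
        Finset.sum_ite_eq'] using this
  have hcard : Fintype.card (Fin n ⊕ Fin n) = Module.finrank ℝ V := by
    simp [hdim]; ring
  let b : Module.Basis (Fin n ⊕ Fin n) ℝ V :=
    Module.Basis.mk li (li.span_eq_top_of_card_eq_finrank' hcard).ge
  have hb : ∀ k, b k = g k := fun k => Module.Basis.mk_apply _ _ _
  constructor
  · refine ⟨b, fun i j => ?_, fun i j => ?_, fun i j => ?_⟩
    · rw [hb, hb]; exact h1 i j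
    · rw [hb, hb]; exact h2 i j
    · rw [hb, hb]; exact h3 i j
  · set σ : ((Fin n → ℝ) × (Fin n → ℝ)) ≃ₗ[ℝ] (Fin n ⊕ Fin n → ℝ) :=
      (LinearEquiv.sumArrowLequivProdArrow (Fin n) (Fin n) ℝ ℝ).symm with hσ
    refine ⟨σ.trans b.equivFun.symm, fun x y => ?_⟩
    have happ : ∀ x : (Fin n → ℝ) × (Fin n → ℝ),
        (σ.trans b.equivFun.symm) x = ∑ k, Sum.elim x.1 x.2 k • g k := by
      intro x
      rw [LinearEquiv.trans_apply, Module.Basis.equivFun_symm_apply]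
      refine Finset.sum_congr rfl fun k _ => ?_
      rw [hb]
      rcases k with i | i <;> rfl
    rw [happ, happ]
    simp only [map_sum, map_smul, LinearMap.sum_apply, LinearMap.smul_apply, smul_eq_mul, hgval]
    rw [Fintype.sum_sum_type]
    simp only [Fintype.sum_sum_type, Sum.elim_inl, Sum.elim_inr, mul_zero, mul_one,
      mul_ite, mul_neg, Finset.sum_const_zero, add_zero, zero_add, neg_zero,
      Finset.sum_ite_eq, Finset.sum_ite_eq', Finset.mem_univ, if_true, Finset.sum_neg_distrib]
    rw [Finset.sum_sub_distrib]
    have e1 : ∑ i, y.1 i * x.2 i = ∑ i, x.2 i * y.1 i :=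
      Finset.sum_congr rfl (fun i _ => mul_comm _ _)
    have e2 : ∑ i, y.2 i * x.1 i = ∑ i, x.1 i * y.2 i :=
      Finset.sum_congr rfl (fun i _ => mul_comm _ _)
    rw [e1, e2]; ring
end

section
/- (Hamiltonian formulation of the Lotka–Volterra system) Let a : Fin n × Fin n → ℝ be skew-symmetric (a_ij = −a_ji), let ε ∈ ℝⁿ, and let q ∈ ℝⁿ with qᵢ > 0 satisfy εᵢ + Σⱼ a_ij qⱼ = 0 for all i. Define on the open positive orthant (0,∞)ⁿ the function h(x) = Σᵢ (xᵢ − qᵢ log xᵢ) and the bracket {f,g}(x) = Σ_{i<j} a_ij xᵢ xⱼ (∂f/∂xᵢ · ∂g/∂xⱼ − ∂f/∂xⱼ · ∂g/∂xᵢ). Then for each i, the bracket of the coordinate function xᵢ with h recovers the Lotka–Volterra vector field: {xᵢ, h}(x) = εᵢ xᵢ + Σⱼ a_ij xᵢ xⱼ for all x in the positive orthant. -/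
/-- The Lotka–Volterra bracket
`{f,g}(x) = Σ_{i<j} a_ij xᵢ xⱼ (∂f/∂xᵢ ∂g/∂xⱼ − ∂f/∂xⱼ ∂g/∂xᵢ)` on the positive
orthant of `ℝⁿ`. -/
noncomputable def lvBracket (n : ℕ) (a : Fin n → Fin n → ℝ)
    (f g : (Fin n → ℝ) → ℝ) (x : Fin n → ℝ) : ℝ :=
  ∑ i : Fin n, ∑ j ∈ Finset.Ioi i,
    a i j * x i * x j *
      (fderiv ℝ f x (Pi.single i 1) * fderiv ℝ g x (Pi.single j 1)
        - fderiv ℝ f x (Pi.single j 1) * fderiv ℝ g x (Pi.single i 1))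

lemma lv_sum_split {n : ℕ} (i : Fin n) (G : Fin n → ℝ) (hGi : G i = 0) :
    ∑ j ∈ Finset.Ioi i, G j + ∑ j ∈ Finset.Iio i, G j = ∑ j : Fin n, G j := by
  classical
  rw [← Finset.filter_lt_eq_Ioi, ← Finset.filter_gt_eq_Iio,
    Finset.sum_filter, Finset.sum_filter, ← Finset.sum_add_distrib]
  refine Finset.sum_congr rfl fun j _ => ?_
  rcases lt_trichotomy i j with h | h | h
  · simp [h, not_lt_of_gt h]
  · simp [← h, hGi]
  · simp [h, not_lt_of_gt h]

/-- Hamiltonian formulation of the Lotka–Volterra system: with a skew-symmetric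
interaction matrix `a` and a positive equilibrium `q`, the bracket of the coordinate
function `xᵢ` with `h(x) = Σᵢ (xᵢ − qᵢ log xᵢ)` recovers the Lotka–Volterra vector
field on the positive orthant. -/
theorem lotka_volterra_hamiltonian
    (n : ℕ) (a : Fin n → Fin n → ℝ) (ε : Fin n → ℝ) (q : Fin n → ℝ)
    (hskew : ∀ i j, a i j = -a j i)
    (hqpos : ∀ i, 0 < q i)
    (heq : ∀ i, ε i + ∑ j : Fin n, a i j * q j = 0) :
    ∀ (i : Fin n) (x : Fin n → ℝ), (∀ k, 0 < x k) →
      lvBracket n a (fun y => y i)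
          (fun y => ∑ k : Fin n, (y k - q k * Real.log (y k))) x
        = ε i * x i + ∑ j : Fin n, a i j * x i * x j := by
  intro i x hx
  classical
  have haii : ∀ p : Fin n, a p p = 0 := fun p => by
    have := hskew p p; linarith
  -- derivative of coordinate function
  have hcoord : ∀ p : Fin n, fderiv ℝ (fun y : Fin n → ℝ => y i) x (Pi.single p 1)
      = if p = i then (1 : ℝ) else 0 := by
    intro p
    have h : (fun y : Fin n → ℝ => y i)
        = (ContinuousLinearMap.proj i : (Fin n → ℝ) →L[ℝ] ℝ) := rfl
    rw [h, ContinuousLinearMap.fderiv]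
    simp [Pi.single_apply, eq_comm]
  -- derivative of the Hamiltonian
  have hH : ∀ p : Fin n,
      fderiv ℝ (fun y : Fin n → ℝ => ∑ k : Fin n, (y k - q k * Real.log (y k))) x
          (Pi.single p 1)
        = 1 - q p / x p := by
    intro p
    have hterm : ∀ k : Fin n, HasFDerivAt (fun y : Fin n → ℝ => y k - q k * Real.log (y k))
        ((1 - q k / x k) • (ContinuousLinearMap.proj k : (Fin n → ℝ) →L[ℝ] ℝ)) x := by
      intro k
      have h1 : HasDerivAt (fun t : ℝ => t - q k * Real.log t) (1 - q k / x k) (x k) := by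
        have := (hasDerivAt_id (x k)).sub
          ((Real.hasDerivAt_log (ne_of_gt (hx k))).const_mul (q k))
        simpa [div_eq_mul_inv, Pi.sub_def] using this
      exact h1.comp_hasFDerivAt x
        ((ContinuousLinearMap.proj k : (Fin n → ℝ) →L[ℝ] ℝ)).hasFDerivAt
    have hsum : HasFDerivAt (fun y : Fin n → ℝ => ∑ k : Fin n, (y k - q k * Real.log (y k)))
        (∑ k : Fin n, (1 - q k / x k) •
          (ContinuousLinearMap.proj k : (Fin n → ℝ) →L[ℝ] ℝ)) x :=
      HasFDerivAt.fun_sum fun k _ => hterm k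
    rw [hsum.fderiv]
    simp only [ContinuousLinearMap.coe_sum', Finset.sum_apply,
      ContinuousLinearMap.coe_smul', Pi.smul_apply, ContinuousLinearMap.proj_apply,
      Pi.single_apply, smul_eq_mul]
    simp [Pi.single_apply, mul_ite, Finset.sum_ite_eq']
  -- rewrite the bracket
  have key : lvBracket n a (fun y => y i)
      (fun y => ∑ k : Fin n, (y k - q k * Real.log (y k))) x
      = ∑ p : Fin n, ∑ j ∈ Finset.Ioi p,
        ((if p = i then a i j * x i * x j * (1 - q j / x j) else 0)
          + (if j = i then a i p * x i * x p * (1 - q p / x p) else 0)) := by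
    unfold lvBracket
    refine Finset.sum_congr rfl fun p _ => Finset.sum_congr rfl fun j hj => ?_
    have hpj : p < j := Finset.mem_Ioi.mp hj
    rw [hcoord, hcoord, hH, hH]
    by_cases hp : p = i
    · have hji : j ≠ i := by
        intro hji
        exact absurd (hp ▸ hji ▸ hpj) (lt_irrefl _)
      simp [hp, hji]
    · by_cases hjc : j = i
      · simp [hp, hjc]
        rw [hskew p i]
        ring
      · simp [hp, hjc]
  rw [key]
  have split : ∑ p : Fin n, ∑ j ∈ Finset.Ioi p,
      ((if p = i then a i j * x i * x j * (1 - q j / x j) else 0)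
        + (if j = i then a i p * x i * x p * (1 - q p / x p) else 0))
      = ∑ j ∈ Finset.Ioi i, (a i j * x i * x j * (1 - q j / x j))
        + ∑ p ∈ Finset.Iio i, (a i p * x i * x p * (1 - q p / x p)) := by
    rw [Finset.sum_congr rfl (fun p _ => Finset.sum_add_distrib),
      Finset.sum_add_distrib]
    congr 1
    · rw [Finset.sum_congr rfl (fun p (_ : p ∈ Finset.univ) => by
        by_cases hp : p = i
        · subst hp
          simp
        · simp [hp] :
        ∀ p ∈ Finset.univ, (∑ j ∈ Finset.Ioi p, if p = i then a i j * x i * x j * (1 - q j / x j) else 0)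
          = if p = i then ∑ j ∈ Finset.Ioi i, a i j * x i * x j * (1 - q j / x j) else 0)]
      simp
    · rw [Finset.sum_congr rfl (fun p (_ : p ∈ Finset.univ) => by
        rw [Finset.sum_ite_eq' (Finset.Ioi p) i (fun _ => a i p * x i * x p * (1 - q p / x p))]
        simp only [Finset.mem_Ioi] :
        ∀ p ∈ Finset.univ, (∑ j ∈ Finset.Ioi p, if j = i then a i p * x i * x p * (1 - q p / x p) else 0)
          = if p < i then a i p * x i * x p * (1 - q p / x p) else 0)]
      rw [← Finset.sum_filter, Finset.filter_gt_eq_Iio]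
  rw [split, lv_sum_split i _ (by simp [haii])]
  have term_eq : ∀ j : Fin n, a i j * x i * x j * (1 - q j / x j)
      = a i j * x i * x j - a i j * x i * q j := by
    intro j
    have hxj : x j ≠ 0 := ne_of_gt (hx j)
    field_simp
  rw [Finset.sum_congr rfl fun j _ => term_eq j, Finset.sum_sub_distrib]
  have hε : ∑ j : Fin n, a i j * x i * q j = - (ε i * x i) := by
    have h := heq i
    have : ∑ j : Fin n, a i j * x i * q j = x i * ∑ j : Fin n, a i j * q j := by
      rw [Finset.mul_sum]
      exact Finset.sum_congr rfl fun j _ => by ring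
    rw [this]
    have h2 : (∑ j : Fin n, a i j * q j) = -ε i := by linarith
    rw [h2]
    ring
  rw [hε]
  ring
end
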